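/- (Mean-square convergence of predicted conditionals) Under the universal mixture assumption, E_μ[(μ(x_k|x_{<k}) − ξ(x_k|x_{<k}))²] → 0 as k → ∞, where the expectation is over histories x_{1:k} drawn from μ (summing the squared difference over the k-th symbol weighted by μ(x_{<k})). -/

import Mathlib

open scoped BigOperators

/-- Conditional probability ρ(a | l) := ρ(l·a)/ρ(l) via Bayes' rule. -/
noncomputable def condP {A : Type} [Fintype A] (ρ : List A → ℝ) (l : List A) (a : A) : ℝ :=
  ρ (l ++ [a]) / ρ l

/-- Cumulative expected conditional relative entropy H_n between μ and ξ. -/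
noncomputable def relEnt {A : Type} [Fintype A] (μ ξ : List A → ℝ) (n : ℕ) : ℝ :=
  ∑ k ∈ Finset.range n, ∑ x : Fin k → A, μ (List.ofFn x) *
    ∑ a : A, condP μ (List.ofFn x) a * Real.log (condP μ (List.ofFn x) a / condP ξ (List.ofFn x) a)

open Filter

section MSAux
open Real Set

lemma aux_anti {f f' : ℝ → ℝ} (hc : ContinuousOn f (Ioc (0:ℝ) 1))
    (hd : ∀ x ∈ Ioo (0:ℝ) 1, HasDerivAt f (f' x) x)
    (hn : ∀ x ∈ Ioo (0:ℝ) 1, f' x ≤ 0)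
    {t : ℝ} (ht : 0 < t) (ht1 : t ≤ 1) : f 1 ≤ f t := by
  have h := antitoneOn_of_hasDerivWithinAt_nonpos (convex_Ioc (0:ℝ) 1) hc
    (fun x hx => by
      rw [interior_Ioc] at hx
      exact (hd x hx).hasDerivWithinAt)
    (fun x hx => by rw [interior_Ioc] at hx; exact hn x hx)
  exact h ⟨ht, ht1⟩ ⟨zero_lt_one, le_refl 1⟩ ht1

lemma aux_L1 {t : ℝ} (ht : 0 < t) (ht1 : t ≤ 1) :
    (t - 1)^2 / 2 ≤ t * Real.log t - t + 1 := by
  have key : ∀ x ∈ Ioo (0:ℝ) 1, HasDerivAt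
      (fun x : ℝ => x * Real.log x - x + 1 - (x-1)^2/2) (Real.log x - x + 1) x := by
    intro x hx
    have h1 : HasDerivAt (fun x : ℝ => x * Real.log x) (Real.log x + 1) x :=
      Real.hasDerivAt_mul_log (ne_of_gt hx.1)
    have h2 : HasDerivAt (fun x : ℝ => (x-1)^2/2) ((2 * (x-1)^1 * 1)/2) x :=
      (((hasDerivAt_id x).sub_const 1).pow 2).div_const 2
    have := ((h1.sub (hasDerivAt_id x)).add_const 1).sub h2
    exact this.congr_deriv (by ring)
  have hf1 : (fun x : ℝ => x * Real.log x - x + 1 - (x-1)^2/2) 1 = 0 := by simp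
  have := aux_anti (f' := fun x => Real.log x - x + 1)
    (by fun_prop) key
    (fun x hx => by
      have := Real.log_le_sub_one_of_pos hx.1
      linarith) ht ht1
  simp only [Real.log_one] at this
  nlinarith [this]

lemma aux_L2 {s : ℝ} (hs : 0 < s) (hs1 : s ≤ 1) :
    (1 - s) + (1 - s)^2 / 2 ≤ - Real.log s := by
  have key : ∀ x ∈ Ioo (0:ℝ) 1, HasDerivAt
      (fun x : ℝ => - Real.log x - (1-x) - (1-x)^2/2) (-(1/x) + 1 + (1-x)) x := by
    intro x hx
    have h1 : HasDerivAt (fun x : ℝ => Real.log x) (1/x) x := by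
      simpa [one_div] using Real.hasDerivAt_log (ne_of_gt hx.1)
    have h2 : HasDerivAt (fun x : ℝ => (1-x)^2/2) ((2 * (1-x)^1 * (0-1))/2) x :=
      (((hasDerivAt_const x (1:ℝ)).sub (hasDerivAt_id x)).pow 2).div_const 2
    have := ((h1.neg).sub ((hasDerivAt_const x (1:ℝ)).sub (hasDerivAt_id x))).sub h2
    exact this.congr_deriv (by ring)
  have := aux_anti (f' := fun x => -(1/x) + 1 + (1-x))
    (by
      apply ContinuousOn.sub
      apply ContinuousOn.sub
      · exact (Real.continuousOn_log.mono (by intro x hx; simp; exact ne_of_gt hx.1)).neg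
      · fun_prop
      · fun_prop) key
    (fun x hx => by
      have h := hx.1
      have : -(1/x) + 1 + (1-x) = -((x-1)^2/x) := by field_simp; ring
      rw [this]
      have : 0 ≤ (x-1)^2/x := by positivity
      linarith) hs hs1
  simp at this
  linarith

lemma klTerm {p q : ℝ} (hp0 : 0 ≤ p) (hp1 : p ≤ 1) (hq0 : 0 < q) (hq1 : q ≤ 1) :
    (p - q)^2 / 2 ≤ p * Real.log (p / q) - p + q := by
  rcases eq_or_lt_of_le hp0 with h0 | hp0'
  · rw [← h0]
    simp
    nlinarith
  rcases le_or_gt p q with hpq | hqp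
  · have hL := aux_L1 (div_pos hp0' hq0) (div_le_one_of_le₀ hpq hq0.le)
    have e2 : q * ((p/q) * Real.log (p/q) - p/q + 1) = p * Real.log (p/q) - p + q := by
      field_simp
    have e1 : q * ((p/q - 1)^2/2) = (p-q)^2/(2*q) := by
      field_simp
    have h3 : (p-q)^2/(2*q) ≤ p * Real.log (p/q) - p + q := by
      rw [← e2, ← e1]
      exact mul_le_mul_of_nonneg_left hL hq0.le
    have h4 : (p-q)^2/2 ≤ (p-q)^2/(2*q) := by
      apply div_le_div_of_nonneg_left (by positivity) (by positivity)
      linarith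
    linarith
  · have hp : 0 < p := hq0.trans hqp
    have hL := aux_L2 (div_pos hq0 hp) (div_le_one_of_le₀ hqp.le hp.le)
    have hlog : - Real.log (q/p) = Real.log (p/q) := by
      rw [← Real.log_inv, inv_div]
    rw [hlog] at hL
    have h3 := mul_le_mul_of_nonneg_left hL hp.le
    have e2 : p * ((1 - q/p) + (1 - q/p)^2/2) = (p - q) + (p-q)^2/(2*p) := by
      field_simp
    rw [e2] at h3
    have h4 : (p-q)^2/2 ≤ (p-q)^2/(2*p) := by
      apply div_le_div_of_nonneg_left (by positivity) (by positivity)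
      linarith
    linarith

lemma ofFn_snoc {A : Type} {n : ℕ} (x : Fin n → A) (a : A) :
    List.ofFn (Fin.snoc x a) = List.ofFn x ++ [a] := by
  rw [List.ofFn_succ']
  simp [List.concat_eq_append]

lemma sum_ofFn_succ {A : Type} [Fintype A] (f : List A → ℝ) (n : ℕ) :
    ∑ y : Fin (n+1) → A, f (List.ofFn y)
      = ∑ x : Fin n → A, ∑ a : A, f (List.ofFn x ++ [a]) := by
  rw [← Equiv.sum_comp (Fin.snocEquiv (fun _ => A)) (fun y => f (List.ofFn y)),
    Fintype.sum_prod_type]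
  rw [Finset.sum_comm]
  apply Finset.sum_congr rfl
  intro x _
  apply Finset.sum_congr rfl
  intro a _
  have : (Fin.snocEquiv (fun _ => A)) (a, x) = Fin.snoc x a := rfl
  rw [this, ofFn_snoc]

lemma sum_prob {A : Type} [Fintype A] (μ : List A → ℝ)
    (hμc : ∀ l, ∑ a : A, μ (l ++ [a]) = μ l) (n : ℕ) :
    ∑ x : Fin n → A, μ (List.ofFn x) = μ [] := by
  induction n with
  | zero => simp
  | succ n ih =>
    rw [sum_ofFn_succ]
    simp_rw [hμc]
    exact ih

lemma mono_prefix {A : Type} [Fintype A] (μ : List A → ℝ)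
    (hμ0 : ∀ l, 0 ≤ μ l) (hμc : ∀ l, ∑ a : A, μ (l ++ [a]) = μ l) (l : List A) :
    μ l ≤ μ [] := by
  induction l using List.reverseRecOn with
  | nil => exact le_refl _
  | append_singleton l a ih =>
    calc μ (l ++ [a]) ≤ ∑ b : A, μ (l ++ [b]) :=
          Finset.single_le_sum (f := fun b => μ (l ++ [b])) (fun b _ => hμ0 _) (Finset.mem_univ a)
      _ = μ l := hμc l
      _ ≤ μ [] := ih

section
variable {A : Type} [Fintype A] (μ ξ : List A → ℝ) (c : ℝ)

lemma pinsker_l (hc : 0 < c)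
    (hμ0 : ∀ l, 0 ≤ μ l) (hμc : ∀ l, ∑ a : A, μ (l ++ [a]) = μ l)
    (hξ0 : ∀ l, 0 ≤ ξ l) (hξc : ∀ l, ∑ a : A, ξ (l ++ [a]) = ξ l)
    (hdom : ∀ l, c * μ l ≤ ξ l) (l : List A) (hl : 0 < μ l) :
    ∑ a : A, (condP μ l a - condP ξ l a) ^ 2
      ≤ 2 * ∑ a : A, condP μ l a * Real.log (condP μ l a / condP ξ l a) := by
  have hξl : 0 < ξ l := lt_of_lt_of_le (by positivity) (hdom l)
  have hqsum : ∑ a : A, condP ξ l a = 1 := by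
    unfold condP
    rw [← Finset.sum_div, hξc l, div_self hξl.ne']
  have hpsum : ∑ a : A, condP μ l a = 1 := by
    unfold condP
    rw [← Finset.sum_div, hμc l, div_self hl.ne']
  have key : ∀ a : A, (condP μ l a - condP ξ l a)^2 / 2 ≤
      condP μ l a * Real.log (condP μ l a / condP ξ l a) - condP μ l a + condP ξ l a := by
    intro a
    by_cases hz : ξ (l ++ [a]) = 0
    · have hmz : μ (l ++ [a]) = 0 := by
        have h1 := hdom (l ++ [a])
        have h2 := hμ0 (l ++ [a])
        rw [hz] at h1
        nlinarith
      simp [condP, hz, hmz]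
    · have hq0 : 0 < condP ξ l a :=
        div_pos (lt_of_le_of_ne (hξ0 _) (Ne.symm hz)) hξl
      have hq1 : condP ξ l a ≤ 1 := by
        unfold condP
        rw [div_le_one hξl]
        rw [← hξc l]
        exact Finset.single_le_sum (f := fun b => ξ (l ++ [b])) (fun b _ => hξ0 _)
          (Finset.mem_univ a)
      have hp0 : 0 ≤ condP μ l a := div_nonneg (hμ0 _) hl.le
      have hp1 : condP μ l a ≤ 1 := by
        unfold condP
        rw [div_le_one hl]
        rw [← hμc l]
        exact Finset.single_le_sum (f := fun b => μ (l ++ [b])) (fun b _ => hμ0 _)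
          (Finset.mem_univ a)
      exact klTerm hp0 hp1 hq0 hq1
  have hsum := Finset.sum_le_sum (s := Finset.univ) (fun (a : A) _ => key a)
  rw [← Finset.sum_div] at hsum
  have : ∑ a : A, (condP μ l a * Real.log (condP μ l a / condP ξ l a) - condP μ l a
      + condP ξ l a)
      = (∑ a : A, condP μ l a * Real.log (condP μ l a / condP ξ l a)) - 1 + 1 := by
    rw [Finset.sum_add_distrib, Finset.sum_sub_distrib, hpsum, hqsum]
  rw [this] at hsum
  linarith

lemma chain_l (hc : 0 < c)
    (hμ0 : ∀ l, 0 ≤ μ l) (hμc : ∀ l, ∑ a : A, μ (l ++ [a]) = μ l)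
    (hξ0 : ∀ l, 0 ≤ ξ l)
    (hdom : ∀ l, c * μ l ≤ ξ l) (l : List A) :
    ∑ a : A, μ (l ++ [a]) * Real.log (μ (l ++ [a]) / ξ (l ++ [a]))
      = μ l * Real.log (μ l / ξ l)
        + μ l * ∑ a : A, condP μ l a * Real.log (condP μ l a / condP ξ l a) := by
  rcases eq_or_lt_of_le (hμ0 l) with h0 | hl
  · have hz : ∀ a : A, μ (l ++ [a]) = 0 := by
      intro a
      have hs : ∑ a : A, μ (l ++ [a]) = 0 := by rw [hμc l, ← h0]
      have := (Finset.sum_eq_zero_iff_of_nonneg (fun b _ => hμ0 (l ++ [b]))).mp hs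
      exact this a (Finset.mem_univ a)
    simp [hz, ← h0, condP]
  · have hξl : 0 < ξ l := lt_of_lt_of_le (by positivity) (hdom l)
    have step : ∀ a : A, μ (l ++ [a]) * Real.log (μ (l ++ [a]) / ξ (l ++ [a]))
        = μ (l ++ [a]) * Real.log (μ l / ξ l)
          + μ l * (condP μ l a * Real.log (condP μ l a / condP ξ l a)) := by
      intro a
      by_cases hz : μ (l ++ [a]) = 0
      · simp [condP, hz]
      · have hm : 0 < μ (l ++ [a]) := lt_of_le_of_ne (hμ0 _) (Ne.symm hz)
        have hx : 0 < ξ (l ++ [a]) := lt_of_lt_of_le (by positivity) (hdom (l ++ [a]))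
        unfold condP
        have harg : μ (l ++ [a]) / ξ (l ++ [a])
            = (μ l / ξ l) * ((μ (l ++ [a]) / μ l) / (ξ (l ++ [a]) / ξ l)) := by
          field_simp
        rw [harg, Real.log_mul (by positivity) (by positivity)]
        field_simp
    rw [Finset.sum_congr rfl (fun a _ => step a), Finset.sum_add_distrib,
      ← Finset.sum_mul, hμc l, ← Finset.mul_sum]
end

section
variable {A : Type} [Fintype A] (μ ξ : List A → ℝ) (c : ℝ)

lemma crux (hc : 0 < c)
    (hμ0 : ∀ l, 0 ≤ μ l) (hμr : μ [] = 1) (hμc : ∀ l, ∑ a : A, μ (l ++ [a]) = μ l)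
    (hξ0 : ∀ l, 0 ≤ ξ l) (hξr : ξ [] = 1) (hξc : ∀ l, ∑ a : A, ξ (l ++ [a]) = ξ l)
    (hdom : ∀ l, c * μ l ≤ ξ l) :
    Tendsto (fun k : ℕ => ∑ x : Fin k → A, μ (List.ofFn x) *
        ∑ a : A, (condP μ (List.ofFn x) a - condP ξ (List.ofFn x) a) ^ 2)
      atTop (nhds 0) := by
  set term : ℕ → ℝ := fun k => ∑ x : Fin k → A, μ (List.ofFn x) *
      ∑ a : A, (condP μ (List.ofFn x) a - condP ξ (List.ofFn x) a) ^ 2 with hterm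
  set D : ℕ → ℝ := fun k => ∑ x : Fin k → A, μ (List.ofFn x) *
      ∑ a : A, condP μ (List.ofFn x) a *
        Real.log (condP μ (List.ofFn x) a / condP ξ (List.ofFn x) a) with hD
  set F : ℕ → ℝ := fun n => ∑ x : Fin n → A, μ (List.ofFn x) *
      Real.log (μ (List.ofFn x) / ξ (List.ofFn x)) with hF
  -- nonnegativity of term
  have hterm0 : ∀ k, 0 ≤ term k := by
    intro k
    apply Finset.sum_nonneg
    intro x _
    apply mul_nonneg (hμ0 _)
    apply Finset.sum_nonneg
    intro a _
    positivity
  -- term k ≤ 2 * D k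
  have htermD : ∀ k, term k ≤ 2 * D k := by
    intro k
    rw [hterm, hD, Finset.mul_sum]
    apply Finset.sum_le_sum
    intro x _
    rcases eq_or_lt_of_le (hμ0 (List.ofFn x)) with h0 | hl
    · rw [← h0]
      simp
    · rw [mul_left_comm]
      exact mul_le_mul_of_nonneg_left
        (pinsker_l μ ξ c hc hμ0 hμc hξ0 hξc hdom (List.ofFn x) hl) (hμ0 _)
  -- telescoping: F n = ∑_{k<n} D k
  have hFD : ∀ n, F n = ∑ k ∈ Finset.range n, D k := by
    intro n
    induction n with
    | zero => simp [hF, List.ofFn_zero, hμr, hξr]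
    | succ n ih =>
      rw [Finset.sum_range_succ, ← ih, hF]
      beta_reduce
      rw [sum_ofFn_succ (fun l => μ l * Real.log (μ l / ξ l)) n]
      beta_reduce
      rw [Finset.sum_congr rfl
        (fun x _ => chain_l μ ξ c hc hμ0 hμc hξ0 hdom (List.ofFn x)),
        Finset.sum_add_distrib]
  -- bound: F n ≤ -log c
  have hFb : ∀ n, F n ≤ -Real.log c := by
    intro n
    have hbound : ∀ x : Fin n → A, μ (List.ofFn x) * Real.log (μ (List.ofFn x) / ξ (List.ofFn x))
        ≤ μ (List.ofFn x) * (-Real.log c) := by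
      intro x
      rcases eq_or_lt_of_le (hμ0 (List.ofFn x)) with h0 | hl
      · rw [← h0]
        simp
      · have hξx : 0 < ξ (List.ofFn x) := lt_of_lt_of_le (by positivity) (hdom _)
        apply mul_le_mul_of_nonneg_left _ (hμ0 _)
        have h1 : μ (List.ofFn x) / ξ (List.ofFn x) ≤ 1 / c := by
          rw [div_le_div_iff₀ hξx hc]
          linarith [hdom (List.ofFn x)]
        calc Real.log (μ (List.ofFn x) / ξ (List.ofFn x)) ≤ Real.log (1 / c) :=
              Real.log_le_log (by positivity) h1
          _ = -Real.log c := by rw [one_div, Real.log_inv]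
    calc F n ≤ ∑ x : Fin n → A, μ (List.ofFn x) * (-Real.log c) :=
          Finset.sum_le_sum (fun x _ => hbound x)
      _ = (∑ x : Fin n → A, μ (List.ofFn x)) * (-Real.log c) := by rw [Finset.sum_mul]
      _ = -Real.log c := by rw [sum_prob μ hμc, hμr, one_mul]
  -- partial sums of term bounded
  have hpartial : ∀ n, ∑ k ∈ Finset.range n, term k ≤ 2 * (-Real.log c) := by
    intro n
    calc ∑ k ∈ Finset.range n, term k ≤ ∑ k ∈ Finset.range n, 2 * D k :=
          Finset.sum_le_sum (fun k _ => htermD k)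
      _ = 2 * ∑ k ∈ Finset.range n, D k := by rw [Finset.mul_sum]
      _ = 2 * F n := by rw [hFD]
      _ ≤ 2 * (-Real.log c) := by linarith [hFb n]
  have hsummable : Summable term := summable_of_sum_range_le hterm0 hpartial
  exact hsummable.tendsto_atTop_zero
end

/-- Mean-square convergence of predicted conditionals: the μ-expected squared
difference of the conditional probabilities of μ and ξ tends to 0 as k → ∞. -/
theorem mean_square_term_tendsto_zero {A : Type} [Fintype A]
    (μs : ℕ → List A → ℝ) (w : ℕ → ℝ)
    (hwpos : ∀ i, 0 < w i) (hwsum : HasSum w 1)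
    (hnn : ∀ i l, 0 ≤ μs i l)
    (hroot : ∀ i, μs i [] = 1)
    (hcompat : ∀ i l, ∑ a : A, μs i (l ++ [a]) = μs i l)
    (ξ : List A → ℝ) (hξ : ∀ l, ξ l = ∑' i, w i * μs i l)
    (i0 : ℕ)
    :
    Tendsto (fun k : ℕ => ∑ x : Fin k → A, μs i0 (List.ofFn x) *
        ∑ a : A, (condP (μs i0) (List.ofFn x) a - condP ξ (List.ofFn x) a) ^ 2)
      atTop (nhds 0) := by
  have hle1 : ∀ i l, μs i l ≤ 1 := by
    intro i l
    calc μs i l ≤ μs i [] := mono_prefix (μs i) (hnn i) (hcompat i) l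
      _ = 1 := hroot i
  have hsuml : ∀ l, Summable (fun i => w i * μs i l) := by
    intro l
    apply Summable.of_nonneg_of_le
      (fun i => mul_nonneg (hwpos i).le (hnn i l))
      (fun i => mul_le_of_le_one_right (hwpos i).le (hle1 i l))
      hwsum.summable
  have hξ0 : ∀ l, 0 ≤ ξ l := by
    intro l
    rw [hξ l]
    exact tsum_nonneg (fun i => mul_nonneg (hwpos i).le (hnn i l))
  have hξr : ξ [] = 1 := by
    rw [hξ []]
    simp only [hroot, mul_one]
    exact hwsum.tsum_eq
  have hξc : ∀ l, ∑ a : A, ξ (l ++ [a]) = ξ l := by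
    intro l
    simp_rw [hξ]
    rw [← Summable.tsum_finsetSum (fun a _ => hsuml (l ++ [a]))]
    apply tsum_congr
    intro i
    rw [← Finset.mul_sum, hcompat i l]
  have hdom : ∀ l, w i0 * μs i0 l ≤ ξ l := by
    intro l
    rw [hξ l]
    exact Summable.le_tsum (hsuml l) i0 (fun j _ => mul_nonneg (hwpos j).le (hnn j l))
  exact crux (μs i0) ξ (w i0) (hwpos i0) (hnn i0) (hroot i0) (hcompat i0)
    hξ0 hξr hξc hdom

end MSAux
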